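/- Let M > 0 and L > 4M. Define r_±(ρ,z) = √(ρ² + (z ∓ M)²), u₀(ρ,z) = ln( (r₊ + r₋ − 2M)/(r₊ + r₋ + 2M) ), u_PS^{±}(ρ,z) = u₀(ρ, z ± L/4) + Σ_{n=1}^{∞}[ u₀(ρ, z − nL ± L/4) + u₀(ρ, z + nL ± L/4) + 4M/(nL) ], and u_PS = u_PS^{−} + u_PS^{+}. Then the double periodic Schwarzschild potential u_PS satisfies u_PS(ρ,z) = (8M/L) ln ρ + O(1) as ρ → ∞: there exist constants C > 0 and ρ₀ > 0 such that |u_PS(ρ,z) − (8M/L) ln ρ| ≤ C for all ρ ≥ ρ₀ and all z ∈ ℝ. -/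

import Mathlib

/-- r₊ = √(ρ² + (z − M)²). -/
noncomputable def rPlus (M ρ z : ℝ) : ℝ := Real.sqrt (ρ ^ 2 + (z - M) ^ 2)

/-- r₋ = √(ρ² + (z + M)²). -/
noncomputable def rMinus (M ρ z : ℝ) : ℝ := Real.sqrt (ρ ^ 2 + (z + M) ^ 2)

/-- The Schwarzschild solution of mass M centered at the origin, in Weyl
coordinates: u₀ = ln((r₊ + r₋ − 2M)/(r₊ + r₋ + 2M)). -/
noncomputable def uSchw (M ρ z : ℝ) : ℝ :=
  Real.log ((rPlus M ρ z + rMinus M ρ z - 2 * M) / (rPlus M ρ z + rMinus M ρ z + 2 * M))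

/-- The periodic Schwarzschild potential with period L, centered at z = −s·(L/4)
shifted by s·L/4, i.e. u_PS^{s}(ρ,z) = u₀(ρ, z + sL/4) + Σ_{n≥1}[u₀(ρ, z − nL + sL/4)
+ u₀(ρ, z + nL + sL/4) + 4M/(nL)], where s = ±1. -/
noncomputable def uPSsigned (M L s ρ z : ℝ) : ℝ :=
  uSchw M ρ (z + s * L / 4)
    + ∑' n : ℕ,
        (uSchw M ρ (z - (n + 1) * L + s * L / 4)
          + uSchw M ρ (z + (n + 1) * L + s * L / 4)
          + 4 * M / ((n + 1) * L))

/-- The double periodic Schwarzschild potential u_PS = u_PS^− + u_PS^+. -/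
noncomputable def uPSdouble (M L ρ z : ℝ) : ℝ :=
  uPSsigned M L (-1) ρ z + uPSsigned M L 1 ρ z

section Bounds

variable {M ρ w : ℝ}

/-- lower bound on the sum of radii -/
lemma S_lower (hM : 0 < M) (hρ : M ≤ ρ) :
    2 * Real.sqrt (ρ ^ 2 + w ^ 2) ≤ rPlus M ρ w + rMinus M ρ w := by
  have hρ0 : 0 < ρ := lt_of_lt_of_le hM hρ
  set A := rPlus M ρ w with hA
  set B := rMinus M ρ w with hB
  have hA0 : 0 ≤ A := Real.sqrt_nonneg _
  have hB0 : 0 ≤ B := Real.sqrt_nonneg _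
  have hA2 : A ^ 2 = ρ ^ 2 + (w - M) ^ 2 := Real.sq_sqrt (by positivity)
  have hB2 : B ^ 2 = ρ ^ 2 + (w + M) ^ 2 := Real.sq_sqrt (by positivity)
  have hAB : ρ ^ 2 + w ^ 2 - M ^ 2 ≤ A * B := by
    have h1 : A * B = Real.sqrt ((ρ ^ 2 + (w - M) ^ 2) * (ρ ^ 2 + (w + M) ^ 2)) := by
      rw [hA, hB, rPlus, rMinus, ← Real.sqrt_mul (by positivity)]
    rw [h1]
    rw [show ρ ^ 2 + w ^ 2 - M ^ 2 = Real.sqrt ((ρ ^ 2 + w ^ 2 - M ^ 2) ^ 2) from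
      (Real.sqrt_sq (by nlinarith)).symm]
    apply Real.sqrt_le_sqrt
    nlinarith [sq_nonneg (ρ * M)]
  have hsq : (2 * Real.sqrt (ρ ^ 2 + w ^ 2)) ^ 2 ≤ (A + B) ^ 2 := by
    have : (Real.sqrt (ρ ^ 2 + w ^ 2)) ^ 2 = ρ ^ 2 + w ^ 2 := Real.sq_sqrt (by positivity)
    nlinarith
  have h2 : 0 ≤ 2 * Real.sqrt (ρ ^ 2 + w ^ 2) := by positivity
  nlinarith [Real.sqrt_nonneg (ρ ^ 2 + w ^ 2)]

/-- upper bound on the sum of radii -/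
lemma S_upper (hM : 0 < M) :
    rPlus M ρ w + rMinus M ρ w ≤ 2 * Real.sqrt (ρ ^ 2 + w ^ 2) + 2 * M := by
  have hw : |w| ≤ Real.sqrt (ρ ^ 2 + w ^ 2) := by
    rw [show |w| = Real.sqrt (w ^ 2) from (Real.sqrt_sq_eq_abs w).symm]
    exact Real.sqrt_le_sqrt (by nlinarith [sq_nonneg ρ])
  have h1 : rPlus M ρ w ≤ Real.sqrt (ρ ^ 2 + w ^ 2) + M := by
    rw [rPlus, show Real.sqrt (ρ ^ 2 + w ^ 2) + M = Real.sqrt ((Real.sqrt (ρ ^ 2 + w ^ 2) + M) ^ 2) from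
      (Real.sqrt_sq (by positivity)).symm]
    apply Real.sqrt_le_sqrt
    have := Real.sq_sqrt (show (0:ℝ) ≤ ρ ^ 2 + w ^ 2 by positivity)
    have habs := abs_nonneg w
    have := neg_abs_le w
    nlinarith
  have h2 : rMinus M ρ w ≤ Real.sqrt (ρ ^ 2 + w ^ 2) + M := by
    rw [rMinus, show Real.sqrt (ρ ^ 2 + w ^ 2) + M = Real.sqrt ((Real.sqrt (ρ ^ 2 + w ^ 2) + M) ^ 2) from
      (Real.sqrt_sq (by positivity)).symm]
    apply Real.sqrt_le_sqrt
    have := Real.sq_sqrt (show (0:ℝ) ≤ ρ ^ 2 + w ^ 2 by positivity)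
    have := le_abs_self w
    nlinarith
  linarith

/-- two-sided bound for -uSchw -/
lemma uSchw_bounds (hM : 0 < M) (hρ : 4 * M ≤ ρ) :
    2 * M / (Real.sqrt (ρ ^ 2 + w ^ 2) + 2 * M) ≤ -(uSchw M ρ w) ∧
    -(uSchw M ρ w) ≤ 2 * M / (Real.sqrt (ρ ^ 2 + w ^ 2) - M) := by
  have hρ0 : 0 < ρ := by linarith
  set R := Real.sqrt (ρ ^ 2 + w ^ 2) with hR
  have hRρ : ρ ≤ R := by
    rw [hR]
    calc ρ = Real.sqrt (ρ ^ 2) := (Real.sqrt_sq hρ0.le).symm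
      _ ≤ _ := Real.sqrt_le_sqrt (by nlinarith [sq_nonneg w])
  have hRM : M < R := by linarith
  set S := rPlus M ρ w + rMinus M ρ w with hS
  have hSlo : 2 * R ≤ S := S_lower hM (by linarith)
  have hShi : S ≤ 2 * R + 2 * M := S_upper hM
  have hS2M : 0 < S - 2 * M := by linarith
  have hS2M' : 0 < S + 2 * M := by linarith
  have hu : -(uSchw M ρ w) = Real.log ((S + 2 * M) / (S - 2 * M)) := by
    rw [uSchw, ← hS, Real.log_div hS2M.ne' hS2M'.ne', Real.log_div hS2M'.ne' hS2M.ne']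
    ring
  constructor
  · -- lower bound: log t ≥ 1 - 1/t
    rw [hu]
    have ht : (0:ℝ) < (S + 2 * M) / (S - 2 * M) := by positivity
    have h1 : Real.log ((S + 2 * M) / (S - 2 * M))⁻¹ ≤ ((S + 2 * M) / (S - 2 * M))⁻¹ - 1 :=
      Real.log_le_sub_one_of_pos (by positivity)
    rw [Real.log_inv] at h1
    have h2 : ((S + 2 * M) / (S - 2 * M))⁻¹ = (S - 2 * M) / (S + 2 * M) := by
      rw [inv_div]
    rw [h2] at h1
    have h3 : 1 - (S - 2 * M) / (S + 2 * M) = 4 * M / (S + 2 * M) := by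
      field_simp
      ring
    have h4 : 4 * M / (S + 2 * M) ≥ 2 * M / (R + 2 * M) := by
      rw [ge_iff_le, div_le_div_iff₀ (by linarith) (by linarith)]
      nlinarith
    linarith
  · rw [hu]
    have h1 : Real.log ((S + 2 * M) / (S - 2 * M)) ≤ (S + 2 * M) / (S - 2 * M) - 1 :=
      Real.log_le_sub_one_of_pos (by positivity)
    have h2 : (S + 2 * M) / (S - 2 * M) - 1 = 4 * M / (S - 2 * M) := by
      field_simp
      ring
    have h3 : 4 * M / (S - 2 * M) ≤ 2 * M / (R - M) := by
      rw [div_le_div_iff₀ (by linarith) (by linarith)]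
      nlinarith
    linarith

end Bounds
section Cor
variable {M ρ w lo hi : ℝ}
open Filter

lemma sqrt_mono_abs (h0 : 0 ≤ lo) (h : lo ≤ |w|) :
    Real.sqrt (ρ ^ 2 + lo ^ 2) ≤ Real.sqrt (ρ ^ 2 + w ^ 2) := by
  apply Real.sqrt_le_sqrt
  have : lo ^ 2 ≤ w ^ 2 := by
    have := sq_abs w
    nlinarith [h, h0]
  linarith

lemma sqrt_ge_self (hρ : 0 ≤ ρ) : ρ ≤ Real.sqrt (ρ ^ 2 + w ^ 2) := by
  calc ρ = Real.sqrt (ρ ^ 2) := (Real.sqrt_sq hρ).symm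
    _ ≤ _ := Real.sqrt_le_sqrt (by nlinarith [sq_nonneg w])

lemma sqrt_ge_abs : |w| ≤ Real.sqrt (ρ ^ 2 + w ^ 2) := by
  calc |w| = Real.sqrt (w ^ 2) := (Real.sqrt_sq_eq_abs w).symm
    _ ≤ _ := Real.sqrt_le_sqrt (by nlinarith [sq_nonneg ρ])

lemma sqrt_le_add (hρ : 0 ≤ ρ) : Real.sqrt (ρ ^ 2 + w ^ 2) ≤ ρ + |w| := by
  rw [show ρ + |w| = Real.sqrt ((ρ + |w|) ^ 2) from (Real.sqrt_sq (by positivity)).symm]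
  apply Real.sqrt_le_sqrt
  have := sq_abs w
  nlinarith [abs_nonneg w, hρ]

lemma uSchw_neg_le (hM : 0 < M) (hρ : 4 * M ≤ ρ) (h0 : 0 ≤ lo) (h : lo ≤ |w|) :
    -(uSchw M ρ w) ≤ 2 * M / (Real.sqrt (ρ ^ 2 + lo ^ 2) - M) := by
  have h1 := (uSchw_bounds (w := w) hM hρ).2
  have h2 : Real.sqrt (ρ ^ 2 + lo ^ 2) ≤ Real.sqrt (ρ ^ 2 + w ^ 2) := sqrt_mono_abs h0 h
  have h3 : M < Real.sqrt (ρ ^ 2 + lo ^ 2) := by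
    have := sqrt_ge_self (w := lo) (ρ := ρ) (by linarith)
    linarith
  calc -(uSchw M ρ w) ≤ 2 * M / (Real.sqrt (ρ ^ 2 + w ^ 2) - M) := h1
    _ ≤ 2 * M / (Real.sqrt (ρ ^ 2 + lo ^ 2) - M) := by
        apply div_le_div_of_nonneg_left (by linarith) (by linarith) (by linarith)

lemma uSchw_neg_ge (hM : 0 < M) (hρ : 4 * M ≤ ρ) (h : |w| ≤ hi) :
    2 * M / (Real.sqrt (ρ ^ 2 + hi ^ 2) + 2 * M) ≤ -(uSchw M ρ w) := by
  have h1 := (uSchw_bounds (w := w) hM hρ).1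
  have h0 : (0:ℝ) ≤ hi := le_trans (abs_nonneg w) h
  have h2 : Real.sqrt (ρ ^ 2 + w ^ 2) ≤ Real.sqrt (ρ ^ 2 + hi ^ 2) := by
    apply Real.sqrt_le_sqrt
    have h5 := sq_abs w
    nlinarith [mul_le_mul h h (abs_nonneg w) h0]
  have h4 : 0 < Real.sqrt (ρ ^ 2 + w ^ 2) + 2 * M := by
    have := Real.sqrt_nonneg (ρ ^ 2 + w ^ 2); linarith
  calc 2 * M / (Real.sqrt (ρ ^ 2 + hi ^ 2) + 2 * M)
      ≤ 2 * M / (Real.sqrt (ρ ^ 2 + w ^ 2) + 2 * M) := by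
        apply div_le_div_of_nonneg_left (by linarith) h4 (by linarith)
    _ ≤ _ := h1

lemma uSchw_nonpos (hM : 0 < M) (hρ : 4 * M ≤ ρ) : uSchw M ρ w ≤ 0 := by
  have := uSchw_neg_ge (hi := |w|) hM hρ le_rfl
  have h3 : 0 < Real.sqrt (ρ ^ 2 + |w| ^ 2) + 2 * M := by
    have := Real.sqrt_nonneg (ρ ^ 2 + |w| ^ 2); linarith
  nlinarith [div_pos (by linarith : (0:ℝ) < 2 * M) h3]

lemma uSchw_abs_le (hM : 0 < M) (hρ : 4 * M ≤ ρ) (h0 : 0 ≤ lo) (h : lo ≤ |w|) :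
    |uSchw M ρ w| ≤ 2 * M / (Real.sqrt (ρ ^ 2 + lo ^ 2) - M) := by
  rw [abs_of_nonpos (uSchw_nonpos hM hρ)]
  exact uSchw_neg_le hM hρ h0 h

/-- uSchw tends to 0 along sequences whose |argument| tends to infinity -/
lemma uSchw_tendsto_zero (hM : 0 < M) (hρ : 4 * M ≤ ρ) (g : ℕ → ℝ)
    (hg : Tendsto (fun N => |g N|) atTop atTop) :
    Tendsto (fun N => uSchw M ρ (g N)) atTop (nhds 0) := by
  apply squeeze_zero_norm' (a := fun N => 2 * M / (|g N| - M))
  · filter_upwards [hg.eventually_ge_atTop (2 * M)] with N hN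
    calc ‖uSchw M ρ (g N)‖ = |uSchw M ρ (g N)| := rfl
      _ ≤ 2 * M / (Real.sqrt (ρ ^ 2 + |g N| ^ 2) - M) := by
          have := uSchw_abs_le (lo := |g N|) (w := g N) hM hρ (abs_nonneg _) le_rfl
          simpa using this
      _ ≤ 2 * M / (|g N| - M) := by
          apply div_le_div_of_nonneg_left (by linarith) (by linarith)
          have := sqrt_ge_abs (ρ := ρ) (w := |g N|)
          simpa using this
  · have h1 : Tendsto (fun N => |g N| - M) atTop atTop := hg.atTop_add tendsto_const_nhds
    have h2 : Tendsto (fun N => (|g N| - M)⁻¹) atTop (nhds 0) := h1.inv_tendsto_atTop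
    have := h2.const_mul (2 * M)
    simpa [div_eq_mul_inv] using this
end Cor
noncomputable def term (M L ρ z c : ℝ) (n : ℕ) : ℝ :=
  uSchw M ρ (z - ((n : ℝ) + 1) * L + c) + uSchw M ρ (z + ((n : ℝ) + 1) * L + c)
    + 4 * M / (((n : ℝ) + 1) * L)

lemma summable_inv_sq : Summable (fun n : ℕ => 1/((n:ℝ)+1)^2) := by
  have h : Summable (fun n : ℕ => 1/((n:ℝ))^2) := by
    rw [Real.summable_one_div_nat_pow]; norm_num
  have := (summable_nat_add_iff 1).mpr h
  apply this.congr
  intro n; push_cast; ring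

section Summab
variable {M L ρ : ℝ}

set_option maxHeartbeats 1000000 in
lemma term_summable (hM : 0 < M) (hL : 4 * M < L) (hρ : 4 * L ≤ ρ) (z c : ℝ) :
    Summable (term M L ρ z c) := by
  have hL0 : 0 < L := by linarith
  have hρ0 : 0 < ρ := by linarith
  have hρM : 4 * M ≤ ρ := by linarith
  obtain ⟨m₀, hA⟩ : ∃ m : ℕ, |z| + |c| ≤ (m : ℝ) * L := by
    refine ⟨⌈(|z| + |c|) / L⌉₊, ?_⟩
    have h1 : (|z| + |c|) / L ≤ (⌈(|z| + |c|) / L⌉₊ : ℝ) := Nat.le_ceil _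
    calc |z| + |c| = ((|z| + |c|) / L) * L := by field_simp
      _ ≤ _ := by apply mul_le_mul_of_nonneg_right h1 hL0.le
  rw [← summable_nat_add_iff m₀]
  set K : ℝ := (4*M*(ρ + 2*M + (m₀:ℝ)*L) + 8*M*((m₀:ℝ)*L + M)) / L^2 with hK
  apply Summable.of_abs
  apply Summable.of_nonneg_of_le (f := fun n : ℕ => K * (1/((n:ℝ)+1)^2))
    (fun n => abs_nonneg _) _ (summable_inv_sq.mul_left K)
  intro n
  set nn : ℝ := (n : ℝ) + 1 with hnn
  have hnn1 : (1:ℝ) ≤ nn := by rw [hnn]; have : (0:ℝ) ≤ (n:ℝ) := Nat.cast_nonneg n; linarith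
  have hnn0 : (0:ℝ) < nn := by linarith
  set mm : ℝ := nn + (m₀ : ℝ) with hmm
  have hmmnn : nn ≤ mm := by rw [hmm]; have : (0:ℝ) ≤ ((m₀:ℕ):ℝ) := Nat.cast_nonneg m₀; linarith
  have hmm0 : (0:ℝ) < mm := by linarith
  have hcast : ((n + m₀ : ℕ) : ℝ) + 1 = mm := by push_cast [hmm, hnn]; ring
  have hterm : term M L ρ z c (n + m₀) =
      uSchw M ρ (z - mm * L + c) + uSchw M ρ (z + mm * L + c) + 4 * M / (mm * L) := by
    rw [term, hcast]
  set wp := z + mm * L + c with hwp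
  set wm := z - mm * L + c with hwm
  have hlo_p : nn * L ≤ |wp| := by
    have h1 : wp ≥ mm * L - (|z| + |c|) := by
      have := neg_abs_le z; have := neg_abs_le c
      rw [hwp]; linarith
    have h2 : mm * L - (|z| + |c|) ≥ nn * L := by nlinarith
    calc nn * L ≤ wp := by linarith
      _ ≤ |wp| := le_abs_self _
  have hlo_m : nn * L ≤ |wm| := by
    have h1 : -wm ≥ mm * L - (|z| + |c|) := by
      have := le_abs_self z; have := le_abs_self c
      rw [hwm]; linarith
    have h2 : mm * L - (|z| + |c|) ≥ nn * L := by nlinarith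
    calc nn * L ≤ -wm := by linarith
      _ ≤ |wm| := neg_le_abs _
  have hhi_p : |wp| ≤ (nn + 2 * (m₀:ℝ)) * L := by
    rw [hwp]
    calc |z + mm * L + c| ≤ |z| + mm * L + |c| := by
          have h1 := abs_add_le (z + mm * L) c
          have h2 := abs_add_le z (mm * L)
          have h3 : |mm * L| = mm * L := abs_of_nonneg (by positivity)
          linarith
      _ ≤ (nn + 2 * (m₀:ℝ)) * L := by nlinarith
  have hhi_m : |wm| ≤ (nn + 2 * (m₀:ℝ)) * L := by
    rw [hwm]
    calc |z - mm * L + c| ≤ |z| + mm * L + |c| := by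
          have h1 := abs_add_le (z - mm * L) c
          have h2 := abs_sub z (mm * L)
          have h3 : |mm * L| = mm * L := abs_of_nonneg (by positivity)
          linarith
      _ ≤ (nn + 2 * (m₀:ℝ)) * L := by nlinarith
  -- upper bound on the term
  set hi : ℝ := (nn + 2 * (m₀:ℝ)) * L with hhi
  have hhi0 : 0 ≤ hi := by positivity
  have hZ : 0 < ρ + hi + 2 * M := by positivity
  have hub : term M L ρ z c (n + m₀) ≤ K * (1/nn^2) := by
    have h1 : -(uSchw M ρ wp) ≥ 2 * M / (ρ + hi + 2 * M) := by
      have := uSchw_neg_ge (hi := hi) hM hρM hhi_p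
      have hs := sqrt_le_add (w := hi) (ρ := ρ) hρ0.le
      rw [abs_of_nonneg hhi0] at hs
      calc 2 * M / (ρ + hi + 2 * M) ≤ 2 * M / (Real.sqrt (ρ^2 + hi^2) + 2 * M) := by
            apply div_le_div_of_nonneg_left (by linarith) (by positivity) (by linarith)
        _ ≤ -(uSchw M ρ wp) := this
    have h2 : -(uSchw M ρ wm) ≥ 2 * M / (ρ + hi + 2 * M) := by
      have := uSchw_neg_ge (hi := hi) hM hρM hhi_m
      have hs := sqrt_le_add (w := hi) (ρ := ρ) hρ0.le
      rw [abs_of_nonneg hhi0] at hs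
      calc 2 * M / (ρ + hi + 2 * M) ≤ 2 * M / (Real.sqrt (ρ^2 + hi^2) + 2 * M) := by
            apply div_le_div_of_nonneg_left (by linarith) (by positivity) (by linarith)
        _ ≤ -(uSchw M ρ wm) := this
    have h3 : term M L ρ z c (n + m₀) ≤ 4 * M / (mm * L) - 4 * M / (ρ + hi + 2 * M) := by
      have hsplit : 4 * M / (ρ + hi + 2 * M) = 2 * M / (ρ + hi + 2 * M) + 2 * M / (ρ + hi + 2 * M) := by
        ring
      rw [hterm, hsplit]; linarith
    have h4 : 4 * M / (mm * L) - 4 * M / (ρ + hi + 2 * M) ≤ K * (1/nn^2) := by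
      have hne1 : mm * L ≠ 0 := by positivity
      have hne2 : ρ + hi + 2 * M ≠ 0 := hZ.ne'
      rw [div_sub_div _ _ hne1 hne2]
      have hnum : 4 * M * (ρ + hi + 2 * M) - mm * L * (4 * M) = 4 * M * (ρ + 2 * M + (m₀:ℝ) * L) := by
        rw [hhi, hmm]; ring
      rw [hnum]
      have hKval : K * (1/nn^2) = (4*M*(ρ + 2*M + (m₀:ℝ)*L) + 8*M*((m₀:ℝ)*L + M)) / (nn^2 * L^2) := by
        rw [hK]; field_simp
      rw [hKval]
      have hm₀0 : (0:ℝ) ≤ (m₀:ℝ) := Nat.cast_nonneg m₀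
      have e2 : nn * L ≤ hi := by
        rw [hhi]; apply mul_le_mul_of_nonneg_right (by linarith) hL0.le
      have hden : nn^2 * L^2 ≤ (mm * L) * (ρ + hi + 2 * M) := by
        have e0 : (0:ℝ) < nn * L := by positivity
        have e1 : nn * L ≤ mm * L := mul_le_mul_of_nonneg_right hmmnn hL0.le
        calc nn^2 * L^2 = (nn*L) * (nn*L) := by ring
          _ ≤ (mm*L) * (nn*L) := mul_le_mul_of_nonneg_right e1 e0.le
          _ ≤ (mm*L) * (ρ + hi + 2*M) := by
              apply mul_le_mul_of_nonneg_left (by linarith) (by positivity)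
      exact div_le_div₀ (by positivity) (by nlinarith) (by positivity) hden
    linarith
  -- lower bound on the term
  have hlb : -(term M L ρ z c (n + m₀)) ≤ K * (1/nn^2) := by
    have hlo0 : (0:ℝ) ≤ nn * L := by positivity
    have hden1 : 0 < nn * L - M := by nlinarith
    have h1 : -(uSchw M ρ wp) ≤ 2 * M / (nn * L - M) := by
      have := uSchw_neg_le (lo := nn * L) hM hρM hlo0 hlo_p
      have hs : nn * L ≤ Real.sqrt (ρ^2 + (nn*L)^2) := by
        have := sqrt_ge_abs (ρ := ρ) (w := nn * L)
        rw [abs_of_nonneg hlo0] at this; exact this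
      calc -(uSchw M ρ wp) ≤ 2 * M / (Real.sqrt (ρ^2 + (nn*L)^2) - M) := this
        _ ≤ 2 * M / (nn * L - M) := by
            apply div_le_div_of_nonneg_left (by linarith) hden1 (by linarith)
    have h2 : -(uSchw M ρ wm) ≤ 2 * M / (nn * L - M) := by
      have := uSchw_neg_le (lo := nn * L) hM hρM hlo0 hlo_m
      have hs : nn * L ≤ Real.sqrt (ρ^2 + (nn*L)^2) := by
        have := sqrt_ge_abs (ρ := ρ) (w := nn * L)
        rw [abs_of_nonneg hlo0] at this; exact this
      calc -(uSchw M ρ wm) ≤ 2 * M / (Real.sqrt (ρ^2 + (nn*L)^2) - M) := this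
        _ ≤ 2 * M / (nn * L - M) := by
            apply div_le_div_of_nonneg_left (by linarith) hden1 (by linarith)
    have h3 : -(term M L ρ z c (n + m₀)) ≤ 4 * M / (nn * L - M) - 4 * M / (mm * L) := by
      have hsplit : 4 * M / (nn * L - M) = 2 * M / (nn * L - M) + 2 * M / (nn * L - M) := by
        ring
      rw [hterm, hsplit]; linarith
    have h4 : 4 * M / (nn * L - M) - 4 * M / (mm * L) ≤ K * (1/nn^2) := by
      have hne1 : nn * L - M ≠ 0 := hden1.ne'
      have hne2 : mm * L ≠ 0 := by positivity
      rw [div_sub_div _ _ hne1 hne2]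
      have hnum : 4 * M * (mm * L) - (nn * L - M) * (4 * M) = 4 * M * ((m₀:ℝ) * L + M) := by
        rw [hmm]; ring
      rw [hnum]
      have hKval : K * (1/nn^2) = (4*M*(ρ + 2*M + (m₀:ℝ)*L) + 8*M*((m₀:ℝ)*L + M)) / (nn^2 * L^2) := by
        rw [hK]; field_simp
      rw [hKval]
      have hm₀0 : (0:ℝ) ≤ (m₀:ℝ) := Nat.cast_nonneg m₀
      have hden : nn^2 * L^2 / 2 ≤ (nn * L - M) * (mm * L) := by
        have e1 : nn * L / 2 ≤ nn * L - M := by nlinarith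
        have e2 : nn * L ≤ mm * L := mul_le_mul_of_nonneg_right hmmnn hL0.le
        have e0 : (0:ℝ) < nn * L := by positivity
        calc nn^2 * L^2 / 2 = (nn*L/2) * (nn*L) := by ring
          _ ≤ (nn*L - M) * (nn*L) := mul_le_mul_of_nonneg_right e1 e0.le
          _ ≤ (nn*L - M) * (mm*L) := mul_le_mul_of_nonneg_left e2 (by linarith)
      calc 4 * M * ((m₀:ℝ) * L + M) / ((nn * L - M) * (mm * L))
          ≤ 4 * M * ((m₀:ℝ) * L + M) / (nn^2 * L^2 / 2) := by
            apply div_le_div_of_nonneg_left (by positivity) (by positivity) hden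
        _ = 8 * M * ((m₀:ℝ) * L + M) / (nn^2 * L^2) := by
            rw [div_div_eq_mul_div, div_eq_div_iff (by positivity) (by positivity)]
            ring
        _ ≤ (4*M*(ρ + 2*M + (m₀:ℝ)*L) + 8*M*((m₀:ℝ)*L + M)) / (nn^2 * L^2) := by
            apply div_le_div_of_nonneg_right ?_ (by positivity)
            nlinarith
    linarith
  rw [abs_le]
  exact ⟨by linarith, hub⟩
end Summab
noncomputable def uGen (M L ρ c z : ℝ) : ℝ := uSchw M ρ (z + c) + ∑' n, term M L ρ z c n

section Periodic
open Filter Finset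
variable {M L ρ : ℝ}

lemma uGen_add_L (hM : 0 < M) (hL : 4 * M < L) (hρ : 4 * L ≤ ρ) (z c : ℝ) :
    uGen M L ρ c (z + L) = uGen M L ρ c z := by
  have hρM : 4 * M ≤ ρ := by linarith
  have hL0 : 0 < L := by linarith
  have hS1 := term_summable hM hL hρ z c
  have hS2 := term_summable hM hL hρ (z + L) c
  set F : ℕ → ℝ := fun k => uSchw M ρ (z - (k:ℝ)*L + c) with hF
  set G : ℕ → ℝ := fun k => uSchw M ρ (z + ((k:ℝ)+1)*L + c) with hG
  have hterm : ∀ n : ℕ, term M L ρ (z+L) c n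
      = term M L ρ z c n + (F n - F (n+1)) + (G (n+1) - G n) := by
    intro n
    simp only [term, hF, hG]
    push_cast
    rw [show z + L - ((n:ℝ)+1)*L + c = z - (n:ℝ)*L + c by ring,
        show z + L + ((n:ℝ)+1)*L + c = z + ((n:ℝ)+1+1)*L + c by ring]
    ring
  have key : ∀ N : ℕ, ∑ n ∈ range N, term M L ρ (z+L) c n
      = ∑ n ∈ range N, term M L ρ z c n + (F 0 - F N) + (G N - G 0) := by
    intro N
    calc ∑ n ∈ range N, term M L ρ (z+L) c n
        = ∑ n ∈ range N, (term M L ρ z c n + (F n - F (n+1)) + (G (n+1) - G n)) :=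
          Finset.sum_congr rfl (fun n _ => hterm n)
      _ = ∑ n ∈ range N, term M L ρ z c n + ∑ n ∈ range N, (F n - F (n+1))
            + ∑ n ∈ range N, (G (n+1) - G n) := by
          rw [Finset.sum_add_distrib, Finset.sum_add_distrib]
      _ = _ := by rw [Finset.sum_range_sub', Finset.sum_range_sub]
  have hFlim : Tendsto F atTop (nhds 0) := by
    apply uSchw_tendsto_zero hM hρM
    have hbase : Tendsto (fun N : ℕ => (N:ℝ)*L + -(|z| + |c|)) atTop atTop := by
      apply tendsto_atTop_add_const_right
      exact (tendsto_natCast_atTop_atTop (R := ℝ)).atTop_mul_const hL0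
    apply tendsto_atTop_mono' atTop ?_ hbase
    filter_upwards with N
    have h1 : -(z - (N:ℝ)*L + c) ≥ (N:ℝ)*L - (|z| + |c|) := by
      have := le_abs_self z; have := le_abs_self c
      linarith
    calc (N:ℝ)*L + -(|z| + |c|) ≤ -(z - (N:ℝ)*L + c) := by linarith
      _ ≤ |z - (N:ℝ)*L + c| := neg_le_abs _
  have hGlim : Tendsto G atTop (nhds 0) := by
    apply uSchw_tendsto_zero hM hρM
    have hbase : Tendsto (fun N : ℕ => (N:ℝ)*L + -(|z| + |c|)) atTop atTop := by
      apply tendsto_atTop_add_const_right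
      exact (tendsto_natCast_atTop_atTop (R := ℝ)).atTop_mul_const hL0
    apply tendsto_atTop_mono' atTop ?_ hbase
    filter_upwards with N
    have h1 : z + ((N:ℝ)+1)*L + c ≥ (N:ℝ)*L - (|z| + |c|) := by
      have := neg_abs_le z; have := neg_abs_le c
      nlinarith
    calc (N:ℝ)*L + -(|z| + |c|) ≤ z + ((N:ℝ)+1)*L + c := by linarith
      _ ≤ |z + ((N:ℝ)+1)*L + c| := le_abs_self _
  have hlim1 : Tendsto (fun N => ∑ n ∈ range N, term M L ρ (z+L) c n) atTop
      (nhds (∑' n, term M L ρ (z+L) c n)) := hS2.hasSum.tendsto_sum_nat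
  have hlim2 : Tendsto (fun N => ∑ n ∈ range N, term M L ρ z c n + (F 0 - F N) + (G N - G 0))
      atTop (nhds (∑' n, term M L ρ z c n + (F 0 - 0) + (0 - G 0))) := by
    apply Tendsto.add
    apply Tendsto.add hS1.hasSum.tendsto_sum_nat
    · exact (tendsto_const_nhds.sub hFlim)
    · exact (hGlim.sub tendsto_const_nhds)
  have heq : (∑' n, term M L ρ (z+L) c n) = ∑' n, term M L ρ z c n + (F 0 - 0) + (0 - G 0) := by
    apply tendsto_nhds_unique hlim1
    apply Tendsto.congr' _ hlim2
    filter_upwards with N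
    rw [key N]
  have hF0 : F 0 = uSchw M ρ (z + c) := by
    simp only [hF]
    rw [show z - ((0:ℕ):ℝ)*L + c = z + c by push_cast; ring]
  have hG0 : G 0 = uSchw M ρ (z + L + c) := by
    simp only [hG]
    rw [show z + (((0:ℕ):ℝ)+1)*L + c = z + L + c by push_cast; ring]
  rw [uGen, uGen, heq, hF0, hG0]
  ring
end Periodic
section SumHelpers
open Finset

lemma sum_inv_sq_le (N : ℕ) : ∑ n ∈ range N, 1/((n:ℝ)+1)^2 ≤ 2 := by
  have key : ∀ N : ℕ, ∑ n ∈ range N, 1/((n:ℝ)+1)^2 ≤ 2 - 2/((N:ℝ)+1) := by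
    intro N
    induction N with
    | zero => norm_num
    | succ N ih =>
      rw [Finset.sum_range_succ]
      have h1 : (0:ℝ) < (N:ℝ)+1 := by positivity
      have h2 : (0:ℝ) < (N:ℝ)+2 := by positivity
      have h3 : 1/((N:ℝ)+1)^2 ≤ 2/((N:ℝ)+1) - 2/((N:ℝ)+2) := by
        rw [div_sub_div _ _ h1.ne' h2.ne', div_le_div_iff₀ (by positivity) (by positivity)]
        ring_nf
        nlinarith [Nat.cast_nonneg (α := ℝ) N]
      push_cast
      push_cast at ih h3
      rw [show ((N:ℝ)+1+1) = ((N:ℝ)+2) by ring]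
      linarith
  have := key N
  have h1 : (0:ℝ) < (N:ℝ)+1 := by positivity
  have : (0:ℝ) ≤ 2/((N:ℝ)+1) := by positivity
  linarith [key N]

lemma sum_harmonic_le (N : ℕ) : ∑ n ∈ range (N+1), 1/((n:ℝ)+1) ≤ Real.log ((N:ℝ)+1) + 1 := by
  induction N with
  | zero => norm_num
  | succ N ih =>
    rw [Finset.sum_range_succ]
    have h1 : (0:ℝ) < (N:ℝ)+1 := by positivity
    have h2 : (0:ℝ) < (N:ℝ)+2 := by positivity
    have hstep : 1/((N:ℝ)+2) ≤ Real.log ((N:ℝ)+2) - Real.log ((N:ℝ)+1) := by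
      rw [← Real.log_div h2.ne' h1.ne']
      have hx : (0:ℝ) < ((N:ℝ)+2)/((N:ℝ)+1) := by positivity
      have := Real.log_le_sub_one_of_pos (x := (((N:ℝ)+2)/((N:ℝ)+1))⁻¹) (by positivity)
      rw [Real.log_inv] at this
      have he : (((N:ℝ)+2)/((N:ℝ)+1))⁻¹ = ((N:ℝ)+1)/((N:ℝ)+2) := by
        rw [inv_div]
      rw [he] at this
      have he2 : 1 - ((N:ℝ)+1)/((N:ℝ)+2) = 1/((N:ℝ)+2) := by
        field_simp
        norm_num
      linarith
    push_cast
    push_cast at ih hstep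
    rw [show ((N:ℝ)+1+1) = ((N:ℝ)+2) by ring]
    linarith

lemma sum_harmonic_ge (N : ℕ) : Real.log ((N:ℝ)+1) ≤ ∑ n ∈ range N, 1/((n:ℝ)+1) := by
  induction N with
  | zero => norm_num
  | succ N ih =>
    rw [Finset.sum_range_succ]
    have h1 : (0:ℝ) < (N:ℝ)+1 := by positivity
    have h2 : (0:ℝ) < (N:ℝ)+2 := by positivity
    have hstep : Real.log ((N:ℝ)+2) - Real.log ((N:ℝ)+1) ≤ 1/((N:ℝ)+1) := by
      rw [← Real.log_div h2.ne' h1.ne']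
      have := Real.log_le_sub_one_of_pos (x := ((N:ℝ)+2)/((N:ℝ)+1)) (by positivity)
      have he2 : ((N:ℝ)+2)/((N:ℝ)+1) - 1 = 1/((N:ℝ)+1) := by
        field_simp
        norm_num
      linarith
    push_cast
    push_cast at ih hstep
    rw [show ((N:ℝ)+1+1) = ((N:ℝ)+2) by ring]
    linarith

lemma telescope_Ico (u : ℕ → ℝ) {a b : ℕ} (h : a ≤ b) :
    ∑ n ∈ Finset.Ico a b, (u n - u (n+1)) = u a - u b := by
  have h2 := Finset.sum_range_add_sum_Ico (fun n => u n - u (n+1)) h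
  rw [Finset.sum_range_sub' u, Finset.sum_range_sub' u] at h2
  linarith

lemma sum_Ico_inv_cube_le {N₀ : ℕ} (N : ℕ) (h : 1 ≤ N₀) :
    ∑ n ∈ Finset.Ico N₀ N, 1/((n:ℝ)+1)^3 ≤ 1/(2*(N₀:ℝ)^2) := by
  rcases le_or_gt N₀ N with hle | hlt
  · have hterm : ∀ n ∈ Finset.Ico N₀ N, 1/((n:ℝ)+1)^3 ≤
        1/(2*(n:ℝ)^2) - 1/(2*((n:ℝ)+1)^2) := by
      intro n hn
      have hn1 : 1 ≤ n := le_trans h (Finset.mem_Ico.mp hn).1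
      have hn1' : (1:ℝ) ≤ (n:ℝ) := by exact_mod_cast hn1
      have h0 : (0:ℝ) < (n:ℝ) := by linarith
      rw [div_sub_div _ _ (by positivity) (by positivity),
        div_le_div_iff₀ (by positivity) (by positivity)]
      ring_nf
      nlinarith [h0, hn1']
    have h2 : ∑ n ∈ Finset.Ico N₀ N, 1/((n:ℝ)+1)^3 ≤
        ∑ n ∈ Finset.Ico N₀ N, (1/(2*(n:ℝ)^2) - 1/(2*((n:ℝ)+1)^2)) :=
      Finset.sum_le_sum hterm
    have h3 : ∑ n ∈ Finset.Ico N₀ N, ((fun k => 1/(2*((k:ℕ):ℝ)^2)) n - (fun k => 1/(2*((k:ℕ):ℝ)^2)) (n+1))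
        = 1/(2*(N₀:ℝ)^2) - 1/(2*(N:ℝ)^2) := telescope_Ico _ hle
    simp only at h3
    have h4 : ∑ n ∈ Finset.Ico N₀ N, (1/(2*(n:ℝ)^2) - 1/(2*((n:ℝ)+1)^2))
        = 1/(2*(N₀:ℝ)^2) - 1/(2*(N:ℝ)^2) := by
      rw [← h3]
      apply Finset.sum_congr rfl
      intro n _
      push_cast
      ring_nf
    have h5 : (0:ℝ) ≤ 1/(2*(N:ℝ)^2) := by positivity
    linarith
  · rw [Finset.Ico_eq_empty (by omega), Finset.sum_empty]
    positivity
end SumHelpers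
section Main
open Finset Filter
variable {M L ρ : ℝ}

/-- ℕ-indexed comparison sequence -/
noncomputable def dd (M L ρ : ℝ) (k : ℕ) : ℝ := 4*M / Real.sqrt (ρ^2 + ((k:ℝ)*L)^2)

/-- main comparison term -/
noncomputable def bse (M L ρ : ℝ) (n : ℕ) : ℝ := 4*M/(((n:ℝ)+1)*L) - dd M L ρ (n+1)

section DD
variable (hM : 0 < M) (hL : 4 * M < L) (hρ : 4 * L ≤ ρ)
include hM hL hρ

lemma hL0 : (0:ℝ) < L := by linarith
lemma hρ0 : (0:ℝ) < ρ := by linarith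

lemma Q_pos (k : ℕ) : 0 < Real.sqrt (ρ^2 + ((k:ℝ)*L)^2) := by
  have hr : (0:ℝ) < ρ := by linarith
  exact Real.sqrt_pos.mpr
    (lt_of_lt_of_le (pow_pos hr 2) (le_add_of_nonneg_right (sq_nonneg _)))

lemma Q_ge_ρ (k : ℕ) : ρ ≤ Real.sqrt (ρ^2 + ((k:ℝ)*L)^2) := sqrt_ge_self (by linarith)

lemma Q_ge_k (k : ℕ) : (k:ℝ)*L ≤ Real.sqrt (ρ^2 + ((k:ℝ)*L)^2) := by
  have h := sqrt_ge_abs (ρ := ρ) (w := (k:ℝ)*L)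
  have h2 : |(k:ℝ)*L| = (k:ℝ)*L :=
    abs_of_nonneg (mul_nonneg (Nat.cast_nonneg k) (by linarith))
  linarith [h, h2.symm.le]

lemma dd_pos (k : ℕ) : 0 < dd M L ρ k := by
  have := Q_pos hM hL hρ (ρ := ρ) (L := L) k
  rw [dd]
  exact div_pos (by linarith) (Q_pos hM hL hρ k)

lemma dd_anti {j k : ℕ} (h : j ≤ k) : dd M L ρ k ≤ dd M L ρ j := by
  rw [dd, dd]
  apply div_le_div_of_nonneg_left (by linarith) (Q_pos hM hL hρ j) _
  apply Real.sqrt_le_sqrt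
  have h1 : ((j:ℝ))*L ≤ (k:ℝ)*L := by
    apply mul_le_mul_of_nonneg_right _ (by linarith)
    exact_mod_cast h
  nlinarith [mul_nonneg (Nat.cast_nonneg (α := ℝ) j) (show (0:ℝ) ≤ L by linarith)]

lemma dd_le_ρ (k : ℕ) : dd M L ρ k ≤ 4*M/ρ := by
  rw [dd]
  apply div_le_div_of_nonneg_left (by linarith) (by linarith) (Q_ge_ρ hM hL hρ k)

lemma dd_le_k {k : ℕ} (hk : 1 ≤ k) : dd M L ρ k ≤ 4*M/((k:ℝ)*L) := by
  rw [dd]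
  have hk' : (1:ℝ) ≤ (k:ℝ) := by exact_mod_cast hk
  apply div_le_div_of_nonneg_left (by linarith) (by nlinarith) (Q_ge_k hM hL hρ k)

lemma bse_nonneg (n : ℕ) : 0 ≤ bse M L ρ n := by
  rw [bse]
  have h := dd_le_k hM hL hρ (k := n+1) (by omega)
  have hc : ((n+1:ℕ):ℝ) = (n:ℝ)+1 := by push_cast; ring
  rw [hc] at h
  linarith

lemma bse_le_harm (n : ℕ) : bse M L ρ n ≤ (4*M/L) * (1/((n:ℝ)+1)) := by
  rw [bse]
  have h1 : (4*M/L) * (1/((n:ℝ)+1)) = 4*M/(((n:ℝ)+1)*L) := by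
    field_simp
  rw [h1]
  have := dd_pos hM hL hρ (ρ := ρ) (L := L) (n+1)
  linarith

lemma bse_ge (n : ℕ) : (4*M/L) * (1/((n:ℝ)+1)) - 4*M/ρ ≤ bse M L ρ n := by
  rw [bse]
  have h1 : (4*M/L) * (1/((n:ℝ)+1)) = 4*M/(((n:ℝ)+1)*L) := by field_simp
  rw [h1]
  have := dd_le_ρ hM hL hρ (ρ := ρ) (L := L) (n+1)
  linarith

lemma bse_le_cube (n : ℕ) : bse M L ρ n ≤ 2*M*ρ^2/(((n:ℝ)+1)^3*L^3) := by
  have hl0 := hL0 hM hL hρ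
  have hr0 := hρ0 hM hL hρ
  set t : ℝ := ((n:ℝ)+1)*L with ht
  have ht0 : 0 < t := by positivity
  set Q : ℝ := Real.sqrt (ρ^2 + t^2) with hQ
  have hQ0 : 0 < Q := Real.sqrt_pos.mpr (by positivity)
  have hQt : t ≤ Q := by
    have := sqrt_ge_abs (ρ := ρ) (w := t)
    rw [abs_of_nonneg ht0.le] at this
    exact this
  have hQsq : Q^2 = ρ^2 + t^2 := Real.sq_sqrt (by positivity)
  have hdd : dd M L ρ (n+1) = 4*M/Q := by
    rw [dd, hQ, ht]
    push_cast
    ring_nf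
  have hbse : bse M L ρ n = 4*M*(Q - t)/(t*Q) := by
    rw [bse, hdd, ← ht, div_sub_div _ _ (by positivity) hQ0.ne']
    congr 1
    ring
  rw [hbse]
  have hkey : (Q - t) * (2*t) ≤ ρ^2 := by nlinarith
  rw [div_le_div_iff₀ (by positivity) (by positivity)]
  have e1 : 0 ≤ Q - t := by linarith
  have e2 : t*t*t ≤ t*Q*t := by nlinarith
  calc 4*M*(Q-t) * (((n:ℝ)+1)^3*L^3) = 2*M*((Q-t)*(2*t))*(t*t) := by rw [ht]; ring
    _ = ((Q-t)*(2*t)) * (2*M*(t*t)) := by ring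
    _ ≤ ρ^2 * (2*M*(t*t)) := by
        apply mul_le_mul_of_nonneg_right hkey
        have : (0:ℝ) ≤ t*t := by positivity
        nlinarith
    _ = 2*M*(t*t)*ρ^2 := by ring
    _ ≤ 2*M*(t*Q)*ρ^2 := by
        apply mul_le_mul_of_nonneg_right _ (sq_nonneg ρ)
        have h1 : t*t ≤ t*Q := by nlinarith
        nlinarith
    _ = 2*M*ρ^2*(t*Q) := by ring
end DD
end Main
section Sums
open Finset
variable {M L ρ : ℝ}
variable (hM : 0 < M) (hL : 4 * M < L) (hρ : 4 * L ≤ ρ)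
include hM hL hρ

lemma eps_up_sum (N : ℕ) :
    ∑ n ∈ range N, (dd M L ρ (n+1) - dd M L ρ (n+3)) ≤ 8*M/ρ := by
  have hr0 : (0:ℝ) < ρ := by linarith
  have hsplit : ∀ n : ℕ, dd M L ρ (n+1) - dd M L ρ (n+3)
      = ((fun k => dd M L ρ (k+1)) n - (fun k => dd M L ρ (k+1)) (n+1))
        + ((fun k => dd M L ρ (k+2)) n - (fun k => dd M L ρ (k+2)) (n+1)) := by
    intro n
    show dd M L ρ (n+1) - dd M L ρ (n+3) = (dd M L ρ (n+1) - dd M L ρ (n+1+1)) + (dd M L ρ (n+2) - dd M L ρ (n+1+2))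
    have e1 : n+1+1 = n+2 := rfl
    have e2 : n+1+2 = n+3 := rfl
    rw [e1, e2]
    ring
  rw [Finset.sum_congr rfl (fun n _ => hsplit n), Finset.sum_add_distrib,
      Finset.sum_range_sub' (fun k => dd M L ρ (k+1)), Finset.sum_range_sub' (fun k => dd M L ρ (k+2))]
  show dd M L ρ 1 - dd M L ρ (N+1) + (dd M L ρ 2 - dd M L ρ (N+2)) ≤ 8*M/ρ
  have l1 := dd_le_ρ hM hL hρ (ρ := ρ) (L := L) 1
  have l2 := dd_le_ρ hM hL hρ (ρ := ρ) (L := L) 2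
  have l3 := dd_pos hM hL hρ (ρ := ρ) (L := L) (N+1)
  have l4 := dd_pos hM hL hρ (ρ := ρ) (L := L) (N+2)
  have : 8*M/ρ = 4*M/ρ + 4*M/ρ := by ring
  rw [this]
  linarith

lemma eps_lo_sum (N : ℕ) :
    ∑ n ∈ range N, (dd M L ρ (n-1) - dd M L ρ (n+1)) ≤ 8*M/ρ := by
  have hr0 : (0:ℝ) < ρ := by linarith
  have hsplit : ∀ n : ℕ, dd M L ρ (n-1) - dd M L ρ (n+1)
      = ((fun k => dd M L ρ (k-1)) n - (fun k => dd M L ρ (k-1)) (n+1))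
        + ((fun k => dd M L ρ k) n - (fun k => dd M L ρ k) (n+1)) := by
    intro n
    show dd M L ρ (n-1) - dd M L ρ (n+1) = (dd M L ρ (n-1) - dd M L ρ (n+1-1)) + (dd M L ρ n - dd M L ρ (n+1))
    have e1 : n+1-1 = n := rfl
    rw [e1]
    ring
  rw [Finset.sum_congr rfl (fun n _ => hsplit n), Finset.sum_add_distrib,
      Finset.sum_range_sub' (fun k => dd M L ρ (k-1)), Finset.sum_range_sub' (fun k => dd M L ρ k)]
  show dd M L ρ 0 - dd M L ρ (N-1) + (dd M L ρ 0 - dd M L ρ N) ≤ 8*M/ρ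
  have l2 := dd_le_ρ hM hL hρ (ρ := ρ) (L := L) 0
  have l3 := dd_pos hM hL hρ (ρ := ρ) (L := L) (N-1)
  have l4 := dd_pos hM hL hρ (ρ := ρ) (L := L) N
  have : 8*M/ρ = 4*M/ρ + 4*M/ρ := by ring
  rw [this]
  linarith

lemma N₀_facts : 4 ≤ ⌊ρ/L⌋₊ ∧ ((⌊ρ/L⌋₊:ℕ):ℝ) ≤ ρ/L ∧ ρ/L < ((⌊ρ/L⌋₊:ℕ):ℝ) + 1 := by
  have hl0 : (0:ℝ) < L := by linarith
  have hx : (4:ℝ) ≤ ρ/L := by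
    rw [le_div_iff₀ hl0]; linarith
  refine ⟨?_, Nat.floor_le (by positivity), Nat.lt_floor_add_one _⟩
  apply Nat.le_floor
  exact_mod_cast hx

lemma harm_sum_le {K : ℕ} (hK : K ≤ ⌊ρ/L⌋₊) :
    ∑ n ∈ range K, 1/((n:ℝ)+1) ≤ Real.log ρ - Real.log L + 1 := by
  obtain ⟨h4, hle, _⟩ := N₀_facts hM hL hρ
  have hl0 : (0:ℝ) < L := by linarith
  have hr0 : (0:ℝ) < ρ := by linarith
  set N₀ := ⌊ρ/L⌋₊ with hN₀
  have h1 : ∑ n ∈ range K, 1/((n:ℝ)+1) ≤ ∑ n ∈ range N₀, 1/((n:ℝ)+1) := by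
    apply Finset.sum_le_sum_of_subset_of_nonneg (Finset.range_subset_range.mpr hK)
    intro i _ _; positivity
  have h2 : ∑ n ∈ range N₀, 1/((n:ℝ)+1) ≤ Real.log (N₀:ℝ) + 1 := by
    have hN1 : 1 ≤ N₀ := by omega
    have := sum_harmonic_le (N₀ - 1)
    have he : N₀ - 1 + 1 = N₀ := by omega
    rw [he] at this
    have he2 : (((N₀ - 1:ℕ)):ℝ) + 1 = (N₀:ℝ) := by
      push_cast [Nat.cast_sub hN1]; ring
    rw [he2] at this
    exact this
  have h3 : Real.log (N₀:ℝ) ≤ Real.log ρ - Real.log L := by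
    rw [← Real.log_div hr0.ne' hl0.ne']
    apply Real.log_le_log (by exact_mod_cast Nat.pos_of_ne_zero (by omega)) hle
  linarith

lemma bse_sum_up (N : ℕ) :
    ∑ n ∈ range N, bse M L ρ n ≤ (4*M/L) * (Real.log ρ - Real.log L + 2) := by
  obtain ⟨h4, hle, hge⟩ := N₀_facts hM hL hρ
  have hl0 : (0:ℝ) < L := by linarith
  have hr0 : (0:ℝ) < ρ := by linarith
  have hML : (0:ℝ) < 4*M/L := by positivity
  set N₀ := ⌊ρ/L⌋₊ with hN₀
  have hpart1 : ∀ K : ℕ, K ≤ N₀ → ∑ n ∈ range K, bse M L ρ n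
      ≤ (4*M/L) * (Real.log ρ - Real.log L + 1) := by
    intro K hK
    calc ∑ n ∈ range K, bse M L ρ n ≤ ∑ n ∈ range K, (4*M/L) * (1/((n:ℝ)+1)) :=
          Finset.sum_le_sum (fun n _ => bse_le_harm hM hL hρ n)
      _ = (4*M/L) * ∑ n ∈ range K, 1/((n:ℝ)+1) := by rw [Finset.mul_sum]
      _ ≤ (4*M/L) * (Real.log ρ - Real.log L + 1) := by
          apply mul_le_mul_of_nonneg_left (harm_sum_le hM hL hρ hK) hML.le
  have hexp : (4*M/L) * (Real.log ρ - Real.log L + 2)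
      = (4*M/L) * (Real.log ρ - Real.log L + 1) + 4*M/L := by ring
  rcases le_or_gt N N₀ with hcase | hcase
  · have := hpart1 N hcase
    rw [hexp]
    linarith
  · have hle2 : N₀ ≤ N := hcase.le
    rw [← Finset.sum_range_add_sum_Ico _ hle2]
    have hpart2 : ∑ n ∈ Finset.Ico N₀ N, bse M L ρ n ≤ 4*M/L := by
      have hterm : ∀ n ∈ Finset.Ico N₀ N, bse M L ρ n ≤ (2*M*ρ^2/L^3) * (1/((n:ℝ)+1)^3) := by
        intro n _
        have := bse_le_cube hM hL hρ (ρ := ρ) (L := L) n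
        have he : 2*M*ρ^2/(((n:ℝ)+1)^3*L^3) = (2*M*ρ^2/L^3) * (1/((n:ℝ)+1)^3) := by
          field_simp
        rw [he] at this
        exact this
      calc ∑ n ∈ Finset.Ico N₀ N, bse M L ρ n
          ≤ ∑ n ∈ Finset.Ico N₀ N, (2*M*ρ^2/L^3) * (1/((n:ℝ)+1)^3) := Finset.sum_le_sum hterm
        _ = (2*M*ρ^2/L^3) * ∑ n ∈ Finset.Ico N₀ N, 1/((n:ℝ)+1)^3 := by rw [Finset.mul_sum]
        _ ≤ (2*M*ρ^2/L^3) * (1/(2*(N₀:ℝ)^2)) := by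
            apply mul_le_mul_of_nonneg_left (sum_Ico_inv_cube_le N (by omega)) (by positivity)
        _ ≤ 4*M/L := by
            have hρN : ρ ≤ 2*(N₀:ℝ)*L := by
              have h1 : ρ/L < (N₀:ℝ)+1 := hge
              have h2 : (1:ℝ) ≤ (N₀:ℝ) := by exact_mod_cast (by omega : 1 ≤ N₀)
              rw [div_lt_iff₀ hl0] at h1
              nlinarith
            have hN0 : (0:ℝ) < (N₀:ℝ) := by exact_mod_cast Nat.pos_of_ne_zero (by omega)
            have hsq : ρ*ρ ≤ (2*(N₀:ℝ)*L)*(2*(N₀:ℝ)*L) :=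
              mul_le_mul hρN hρN hr0.le (by positivity)
            rw [div_mul_div_comm, div_le_div_iff₀ (by positivity) hl0]
            nlinarith [hsq, mul_pos hM hl0, mul_pos (mul_pos hM hl0) (mul_pos hN0 hN0)]
    have := hpart1 N₀ le_rfl
    rw [hexp]
    linarith
end Sums
section Sums2
open Finset
variable {M L ρ : ℝ}
variable (hM : 0 < M) (hL : 4 * M < L) (hρ : 4 * L ≤ ρ)
include hM hL hρ

lemma bse_sum_lo {N : ℕ} (hN : ⌊ρ/L⌋₊ ≤ N) :
    (4*M/L) * (Real.log ρ - Real.log L - 1) ≤ ∑ n ∈ range N, bse M L ρ n := by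
  obtain ⟨h4, hle, hge⟩ := N₀_facts hM hL hρ
  have hl0 : (0:ℝ) < L := by linarith
  have hr0 : (0:ℝ) < ρ := by linarith
  have hML : (0:ℝ) < 4*M/L := by positivity
  set N₀ := ⌊ρ/L⌋₊ with hN₀
  have h1 : ∑ n ∈ range N₀, bse M L ρ n ≤ ∑ n ∈ range N, bse M L ρ n := by
    apply Finset.sum_le_sum_of_subset_of_nonneg (Finset.range_subset_range.mpr hN)
    intro i _ _; exact bse_nonneg hM hL hρ i
  have h2 : ∑ n ∈ range N₀, ((4*M/L) * (1/((n:ℝ)+1)) - 4*M/ρ) ≤ ∑ n ∈ range N₀, bse M L ρ n :=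
    Finset.sum_le_sum (fun n _ => bse_ge hM hL hρ n)
  have h3 : ∑ n ∈ range N₀, ((4*M/L) * (1/((n:ℝ)+1)) - 4*M/ρ)
      = (4*M/L) * (∑ n ∈ range N₀, 1/((n:ℝ)+1)) - (N₀:ℝ) * (4*M/ρ) := by
    rw [Finset.sum_sub_distrib, ← Finset.mul_sum, Finset.sum_const, Finset.card_range]
    simp [nsmul_eq_mul]
  have h4' : Real.log ρ - Real.log L ≤ ∑ n ∈ range N₀, 1/((n:ℝ)+1) := by
    have := sum_harmonic_ge N₀
    have hlog : Real.log ρ - Real.log L ≤ Real.log ((N₀:ℝ)+1) := by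
      rw [← Real.log_div hr0.ne' hl0.ne']
      exact Real.log_le_log (by positivity) hge.le
    linarith
  have h5 : (N₀:ℝ) * (4*M/ρ) ≤ 4*M/L := by
    have : (N₀:ℝ) * (4*M/ρ) ≤ (ρ/L) * (4*M/ρ) := by
      apply mul_le_mul_of_nonneg_right hle (by positivity)
    have he : (ρ/L) * (4*M/ρ) = 4*M/L := by field_simp
    linarith [he ▸ this]
  have h6 : (4*M/L) * (Real.log ρ - Real.log L) ≤ (4*M/L) * ∑ n ∈ range N₀, 1/((n:ℝ)+1) :=
    mul_le_mul_of_nonneg_left h4' hML.le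
  have hexp : (4*M/L) * (Real.log ρ - Real.log L - 1)
      = (4*M/L) * (Real.log ρ - Real.log L) - 4*M/L := by ring
  rw [hexp]
  linarith
end Sums2
section TermBounds
open Finset
variable {M L ρ z c : ℝ}
variable (hM : 0 < M) (hL : 4 * M < L) (hρ : 4 * L ≤ ρ)
variable (hz0 : 0 ≤ z) (hz1 : z ≤ L) (hc : |c| ≤ L/4)
include hM hL hρ hz0 hz1 hc

set_option maxHeartbeats 1000000 in
lemma term_up (n : ℕ) : term M L ρ z c n ≤
    bse M L ρ n + (dd M L ρ (n+1) - dd M L ρ (n+3)) + 8*M^2/(((n:ℝ)+1)^2*L^2) := by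
  have hl0 : (0:ℝ) < L := by linarith
  have hr0 : (0:ℝ) < ρ := by linarith
  have hρM : 4*M ≤ ρ := by linarith
  obtain ⟨m, hm⟩ : ∃ x:ℝ, x = (n:ℝ)+1 := ⟨_, rfl⟩
  have hm1 : (1:ℝ) ≤ m := by rw [hm]; have : (0:ℝ) ≤ (n:ℝ) := Nat.cast_nonneg n; linarith
  have hm0 : (0:ℝ) < m := by linarith
  obtain ⟨hi, hhi⟩ : ∃ x:ℝ, x = ((n+3:ℕ):ℝ)*L := ⟨_, rfl⟩
  have hhi' : hi = (m+2)*L := by rw [hhi, hm]; push_cast; ring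
  have hcabs := abs_le.mp hc
  have hhip : |z + m*L + c| ≤ hi := by
    rw [hhi', abs_le]
    constructor <;> nlinarith
  have hhim : |z - m*L + c| ≤ hi := by
    rw [hhi', abs_le]
    constructor <;> nlinarith
  obtain ⟨Q, hQ⟩ : ∃ x:ℝ, x = Real.sqrt (ρ^2 + hi^2) := ⟨_, rfl⟩
  have hQ0 : 0 < Q := by
    rw [hQ]
    exact Real.sqrt_pos.mpr (by positivity)
  have hQhi : hi ≤ Q := by
    rw [hQ]
    have := sqrt_ge_abs (ρ := ρ) (w := hi)
    rw [abs_of_nonneg (by rw [hhi']; nlinarith)] at this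
    exact this
  have hQm : m*L ≤ Q := by
    have : m*L ≤ hi := by rw [hhi']; nlinarith
    linarith
  have hdd3 : dd M L ρ (n+3) = 4*M/Q := by rw [dd, hQ, hhi]
  have hu1 : 2*M/(Q + 2*M) ≤ -(uSchw M ρ (z + m*L + c)) := by
    have := uSchw_neg_ge (hi := hi) hM hρM hhip
    rw [← hQ] at this
    exact this
  have hu2 : 2*M/(Q + 2*M) ≤ -(uSchw M ρ (z - m*L + c)) := by
    have := uSchw_neg_ge (hi := hi) hM hρM hhim
    rw [← hQ] at this
    exact this
  have hineqA : 4*M/Q - 4*M/(Q+2*M) ≤ 8*M^2/(m^2*L^2) := by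
    rw [div_sub_div _ _ hQ0.ne' (by positivity : (0:ℝ) < Q+2*M).ne',
      show 4*M*(Q+2*M) - Q*(4*M) = 8*M^2 by ring]
    apply div_le_div_of_nonneg_left (by positivity) (by positivity)
    calc m^2*L^2 = (m*L)*(m*L) := by ring
      _ ≤ Q*(m*L) := mul_le_mul_of_nonneg_right hQm (by positivity)
      _ ≤ Q*(Q+2*M) := by
          apply mul_le_mul_of_nonneg_left _ hQ0.le
          linarith
  have hfin : bse M L ρ n + (dd M L ρ (n+1) - dd M L ρ (n+3)) = 4*M/(m*L) - 4*M/Q := by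
    rw [bse, hdd3, hm]
    ring
  have hterm : term M L ρ z c n = uSchw M ρ (z - m*L + c) + uSchw M ρ (z + m*L + c) + 4*M/(m*L) := by
    rw [term, hm]
  have hsum : 2*M/(Q+2*M) + 2*M/(Q+2*M) = 4*M/(Q+2*M) := by ring
  rw [hterm]
  have hm2 : 8*M^2/(m^2*L^2) = 8*M^2/(((n:ℝ)+1)^2*L^2) := by rw [hm]
  linarith

set_option maxHeartbeats 1000000 in
lemma term_lo (n : ℕ) :
    bse M L ρ n - (dd M L ρ (n-1) - dd M L ρ (n+1)) - 72*M^2/(((n:ℝ)+1)^2*L^2)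
      ≤ term M L ρ z c n := by
  have hl0 : (0:ℝ) < L := by linarith
  have hr0 : (0:ℝ) < ρ := by linarith
  have hρM : 4*M ≤ ρ := by linarith
  obtain ⟨m, hm⟩ : ∃ x:ℝ, x = (n:ℝ)+1 := ⟨_, rfl⟩
  have hm1 : (1:ℝ) ≤ m := by rw [hm]; have : (0:ℝ) ≤ (n:ℝ) := Nat.cast_nonneg n; linarith
  have hm0 : (0:ℝ) < m := by linarith
  obtain ⟨lo, hlo⟩ : ∃ x:ℝ, x = ((n-1:ℕ):ℝ)*L := ⟨_, rfl⟩
  have hlo0 : 0 ≤ lo := by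
    rw [hlo]; positivity
  have hcabs := abs_le.mp hc
  have hlon : ((n-1:ℕ):ℝ) ≤ (n:ℝ) := by
    exact_mod_cast Nat.cast_le.mpr (Nat.sub_le n 1)
  have hlop : lo ≤ |z + m*L + c| := by
    have h1 : z + m*L + c ≥ m*L - L/4 := by nlinarith
    have h2 : lo ≤ m*L - L/4 := by
      rw [hlo, hm]
      nlinarith
    calc lo ≤ z + m*L + c := by linarith
      _ ≤ |z + m*L + c| := le_abs_self _
  have hlom : lo ≤ |z - m*L + c| := by
    rcases Nat.eq_zero_or_pos n with h0 | hpos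
    · subst h0
      simp only [Nat.zero_sub, Nat.cast_zero, zero_mul] at hlo
      rw [hlo]
      exact abs_nonneg _
    · have hn1 : (1:ℝ) ≤ (n:ℝ) := by exact_mod_cast hpos
      have hcast : ((n-1:ℕ):ℝ) = (n:ℝ) - 1 := by
        push_cast [Nat.cast_sub hpos]
        ring
      have h1 : -(z - m*L + c) ≥ m*L - L - L/4 := by nlinarith
      have h2 : lo ≤ m*L - L - L/4 := by
        rw [hlo, hcast, hm]
        nlinarith
      calc lo ≤ -(z - m*L + c) := by linarith
        _ ≤ |z - m*L + c| := neg_le_abs _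
  obtain ⟨Q, hQ⟩ : ∃ x:ℝ, x = Real.sqrt (ρ^2 + lo^2) := ⟨_, rfl⟩
  have hQ0 : 0 < Q := by
    rw [hQ]
    exact Real.sqrt_pos.mpr (by positivity)
  have hQρ : ρ ≤ Q := by
    rw [hQ]; exact sqrt_ge_self hr0.le
  have hQlo : lo ≤ Q := by
    rw [hQ]
    have := sqrt_ge_abs (ρ := ρ) (w := lo)
    rw [abs_of_nonneg hlo0] at this
    exact this
  have hQM : 2*M < Q := by linarith
  have hdd1 : dd M L ρ (n-1) = 4*M/Q := by rw [dd, hQ, hlo]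
  have hu1 : -(uSchw M ρ (z + m*L + c)) ≤ 2*M/(Q - M) := by
    have := uSchw_neg_le (lo := lo) hM hρM hlo0 hlop
    rw [← hQ] at this
    exact this
  have hu2 : -(uSchw M ρ (z - m*L + c)) ≤ 2*M/(Q - M) := by
    have := uSchw_neg_le (lo := lo) hM hρM hlo0 hlom
    rw [← hQ] at this
    exact this
  have hineqB : 4*M/(Q-M) - 4*M/Q ≤ 8*M^2/Q^2 := by
    have hQM0 : (0:ℝ) < Q - M := by linarith
    rw [div_sub_div _ _ hQM0.ne' hQ0.ne',
      show 4*M*Q - (Q-M)*(4*M) = 4*M^2 by ring]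
    rw [div_le_div_iff₀ (mul_pos hQM0 hQ0) (by positivity)]
    nlinarith [mul_nonneg (mul_nonneg (sq_nonneg M) hQ0.le) (by linarith : (0:ℝ) ≤ Q - 2*M)]
  have hineqC : 8*M^2/Q^2 ≤ 72*M^2/(m^2*L^2) := by
    rcases le_or_gt n 2 with hn2 | hn2
    · have hmle : m ≤ 3 := by
        rw [hm]
        have : (n:ℝ) ≤ 2 := by exact_mod_cast hn2
        linarith
      have h1 : 8*M^2/Q^2 ≤ 8*M^2/ρ^2 := by
        apply div_le_div_of_nonneg_left (by positivity) (by positivity)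
        nlinarith [mul_le_mul hQρ hQρ hr0.le hQ0.le]
      have h2 : 8*M^2/ρ^2 ≤ 8*M^2/(16*L^2) := by
        apply div_le_div_of_nonneg_left (by positivity) (by positivity)
        nlinarith [mul_le_mul hρ hρ (by linarith : (0:ℝ) ≤ 4*L) hr0.le]
      have h3 : 8*M^2/(16*L^2) ≤ 72*M^2/(m^2*L^2) := by
        rw [div_le_div_iff₀ (by positivity) (by positivity)]
        nlinarith [mul_le_mul hmle hmle hm0.le (by linarith : (0:ℝ) ≤ 3), sq_nonneg (M*L)]
      linarith
    · have hn1 : 1 ≤ n := by omega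
      have hcast : ((n-1:ℕ):ℝ) = (n:ℝ) - 1 := by
        push_cast [Nat.cast_sub hn1]
        ring
      have hn2' : (2:ℝ) ≤ (n:ℝ) := by exact_mod_cast hn2.le
      have hQ3 : m*L/3 ≤ Q := by
        have h1 : m ≤ 3*((n:ℝ)-1) := by rw [hm]; linarith
        have h2 : ((n:ℝ)-1)*L ≤ Q := by
          rw [← hcast, ← hlo]
          exact hQlo
        nlinarith
      have hpos : (0:ℝ) < m*L/3 := by positivity
      have h1 : 8*M^2/Q^2 ≤ 8*M^2/((m*L/3)^2) := by
        apply div_le_div_of_nonneg_left (by positivity) (by positivity)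
        nlinarith [mul_le_mul hQ3 hQ3 hpos.le hQ0.le]
      have he : 8*M^2/((m*L/3)^2) = 72*M^2/(m^2*L^2) := by
        field_simp
        ring
      linarith
  have hfin : bse M L ρ n - (dd M L ρ (n-1) - dd M L ρ (n+1)) = 4*M/(m*L) - 4*M/Q := by
    rw [bse, hdd1, hm]
    ring
  have hterm : term M L ρ z c n = uSchw M ρ (z - m*L + c) + uSchw M ρ (z + m*L + c) + 4*M/(m*L) := by
    rw [term, hm]
  have hsum : 2*M/(Q-M) + 2*M/(Q-M) = 4*M/(Q-M) := by ring
  rw [hterm]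
  have hm2 : 72*M^2/(m^2*L^2) = 72*M^2/(((n:ℝ)+1)^2*L^2) := by rw [hm]
  linarith
end TermBounds
section Final
open Finset Filter
variable {M L ρ : ℝ}
variable (hM : 0 < M) (hL : 4 * M < L) (hρ : 4 * L ≤ ρ)
include hM hL hρ

lemma uGen_int (z c : ℝ) (k : ℤ) : uGen M L ρ c (z + (k:ℝ)*L) = uGen M L ρ c z := by
  induction k using Int.induction_on with
  | zero => norm_num
  | succ i ih =>
    have h := uGen_add_L hM hL hρ (z + (i:ℝ)*L) c
    have hc1 : (((i:ℤ)+1 : ℤ):ℝ) = (i:ℝ)+1 := by push_cast; ring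
    rw [hc1, show z + ((i:ℝ)+1)*L = z + (i:ℝ)*L + L by ring, h]
    exact_mod_cast ih
  | pred i ih =>
    have h := uGen_add_L hM hL hρ (z + (-(i:ℝ)-1)*L) c
    rw [show z + (-(i:ℝ)-1)*L + L = z + (-(i:ℝ))*L by ring] at h
    have hc1 : (((-(i:ℤ))-1 : ℤ):ℝ) = -(i:ℝ)-1 := by push_cast; ring
    rw [hc1, ← h]
    have hc2 : ((-(i:ℤ) : ℤ):ℝ) = -(i:ℝ) := by push_cast; ring
    rw [hc2] at ih
    exact_mod_cast ih

lemma tsum_term_bound {z c : ℝ} (hz0 : 0 ≤ z) (hz1 : z ≤ L) (hc : |c| ≤ L/4) :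
    |(∑' n, term M L ρ z c n) - (4*M/L) * (Real.log ρ - Real.log L)| ≤ (4*M/L)*2 + 10 := by
  have hl0 : (0:ℝ) < L := by linarith
  have hr0 : (0:ℝ) < ρ := by linarith
  have hML : (0:ℝ) < 4*M/L := by positivity
  have hS := term_summable hM hL hρ z c
  have hten := hS.hasSum.tendsto_sum_nat
  have hMq : 4*M ≤ L := by linarith
  have hsq8 : ∀ N : ℕ, ∑ n ∈ range N, 8*M^2/(((n:ℝ)+1)^2*L^2) ≤ 1 := by
    intro N
    have he : ∀ n : ℕ, 8*M^2/(((n:ℝ)+1)^2*L^2) = (8*M^2/L^2) * (1/((n:ℝ)+1)^2) := by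
      intro n; field_simp
    rw [Finset.sum_congr rfl (fun n _ => he n), ← Finset.mul_sum]
    have h1 : 8*M^2/L^2 ≤ 1/2 := by
      rw [div_le_iff₀ (by positivity)]
      nlinarith
    have h2 := sum_inv_sq_le N
    have h3 : (0:ℝ) ≤ ∑ n ∈ range N, 1/((n:ℝ)+1)^2 := by
      apply Finset.sum_nonneg; intro i _; positivity
    nlinarith
  have hsq72 : ∀ N : ℕ, ∑ n ∈ range N, 72*M^2/(((n:ℝ)+1)^2*L^2) ≤ 9 := by
    intro N
    have he : ∀ n : ℕ, 72*M^2/(((n:ℝ)+1)^2*L^2) = (72*M^2/L^2) * (1/((n:ℝ)+1)^2) := by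
      intro n; field_simp
    rw [Finset.sum_congr rfl (fun n _ => he n), ← Finset.mul_sum]
    have h1 : 72*M^2/L^2 ≤ 9/2 := by
      rw [div_le_iff₀ (by positivity)]
      nlinarith
    have h2 := sum_inv_sq_le N
    have h3 : (0:ℝ) ≤ ∑ n ∈ range N, 1/((n:ℝ)+1)^2 := by
      apply Finset.sum_nonneg; intro i _; positivity
    nlinarith
  have h8ρ : 8*M/ρ ≤ 1 := by
    rw [div_le_one hr0]
    linarith
  have hup : ∀ N : ℕ, ∑ n ∈ range N, term M L ρ z c n
      ≤ (4*M/L)*(Real.log ρ - Real.log L + 2) + 2 := by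
    intro N
    have h1 : ∑ n ∈ range N, term M L ρ z c n
        ≤ ∑ n ∈ range N, (bse M L ρ n + (dd M L ρ (n+1) - dd M L ρ (n+3))
            + 8*M^2/(((n:ℝ)+1)^2*L^2)) :=
      Finset.sum_le_sum (fun n _ => term_up hM hL hρ hz0 hz1 hc n)
    rw [Finset.sum_add_distrib, Finset.sum_add_distrib] at h1
    have h2 := bse_sum_up hM hL hρ (ρ := ρ) (L := L) N
    have h3 := eps_up_sum hM hL hρ (ρ := ρ) (L := L) N
    have h4 := hsq8 N
    linarith
  have hlow : ∀ N : ℕ, N ≥ ⌊ρ/L⌋₊ →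
      (4*M/L)*(Real.log ρ - Real.log L - 1) - 10 ≤ ∑ n ∈ range N, term M L ρ z c n := by
    intro N hN
    have h1 : ∑ n ∈ range N, (bse M L ρ n - (dd M L ρ (n-1) - dd M L ρ (n+1))
        - 72*M^2/(((n:ℝ)+1)^2*L^2)) ≤ ∑ n ∈ range N, term M L ρ z c n :=
      Finset.sum_le_sum (fun n _ => term_lo hM hL hρ hz0 hz1 hc n)
    rw [Finset.sum_sub_distrib, Finset.sum_sub_distrib] at h1
    have h2 := bse_sum_lo hM hL hρ (ρ := ρ) (L := L) hN
    have h3 := eps_lo_sum hM hL hρ (ρ := ρ) (L := L) N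
    have h4 := hsq72 N
    linarith
  have hupper : (∑' n, term M L ρ z c n) ≤ (4*M/L)*(Real.log ρ - Real.log L + 2) + 2 :=
    le_of_tendsto' hten hup
  have hlower : (4*M/L)*(Real.log ρ - Real.log L - 1) - 10 ≤ (∑' n, term M L ρ z c n) := by
    apply ge_of_tendsto hten
    exact eventually_atTop.mpr ⟨⌊ρ/L⌋₊, hlow⟩
  rw [abs_le]
  constructor
  · have he : (4*M/L)*(Real.log ρ - Real.log L - 1)
        = (4*M/L)*(Real.log ρ - Real.log L) - (4*M/L)*1 := by ring
    rw [he] at hlower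
    nlinarith
  · have he : (4*M/L)*(Real.log ρ - Real.log L + 2)
        = (4*M/L)*(Real.log ρ - Real.log L) + (4*M/L)*2 := by ring
    rw [he] at hupper
    linarith

lemma uGen_bound {z c : ℝ} (hz0 : 0 ≤ z) (hz1 : z ≤ L) (hc : |c| ≤ L/4) :
    |uGen M L ρ c z - (4*M/L) * Real.log ρ| ≤ (4*M/L)*(|Real.log L| + 2) + 11 := by
  have hl0 : (0:ℝ) < L := by linarith
  have hr0 : (0:ℝ) < ρ := by linarith
  have hML : (0:ℝ) < 4*M/L := by positivity
  have hρM : 4*M ≤ ρ := by linarith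
  have hu : |uSchw M ρ (z + c)| ≤ 1 := by
    have h1 := uSchw_abs_le (lo := 0) (w := z + c) hM hρM le_rfl (abs_nonneg _)
    have h2 : Real.sqrt (ρ^2 + 0^2) = ρ := by
      rw [show ρ^2 + 0^2 = ρ^2 by ring, Real.sqrt_sq hr0.le]
    rw [h2] at h1
    have h3 : 2*M/(ρ - M) ≤ 1 := by
      rw [div_le_one (by linarith)]
      linarith
    linarith
  have ht := tsum_term_bound hM hL hρ hz0 hz1 hc
  rw [uGen]
  have habs1 : |(4*M/L) * Real.log L| ≤ (4*M/L) * |Real.log L| := by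
    rw [abs_mul]
    have : |4*M/L| = 4*M/L := abs_of_pos hML
    rw [this]
  have hsplit : uSchw M ρ (z + c) + (∑' n, term M L ρ z c n) - (4*M/L) * Real.log ρ
      = uSchw M ρ (z + c) + ((∑' n, term M L ρ z c n) - (4*M/L) * (Real.log ρ - Real.log L))
        + (-((4*M/L) * Real.log L)) := by ring
  rw [hsplit]
  calc |uSchw M ρ (z + c) + ((∑' n, term M L ρ z c n) - (4*M/L) * (Real.log ρ - Real.log L))
        + (-((4*M/L) * Real.log L))|
      ≤ |uSchw M ρ (z + c) + ((∑' n, term M L ρ z c n) - (4*M/L) * (Real.log ρ - Real.log L))|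
        + |(-((4*M/L) * Real.log L))| := abs_add_le _ _
    _ ≤ |uSchw M ρ (z + c)| + |(∑' n, term M L ρ z c n) - (4*M/L) * (Real.log ρ - Real.log L)|
        + |(4*M/L) * Real.log L| := by
        have := abs_add_le (uSchw M ρ (z + c))
          ((∑' n, term M L ρ z c n) - (4*M/L) * (Real.log ρ - Real.log L))
        rw [abs_neg]
        linarith
    _ ≤ 1 + ((4*M/L)*2 + 10) + (4*M/L) * |Real.log L| := by linarith
    _ = (4*M/L)*(|Real.log L| + 2) + 11 := by ring
end Final

lemma uPSsigned_eq_uGen (M L s ρ z : ℝ) : uPSsigned M L s ρ z = uGen M L ρ (s * L / 4) z := rfl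

/-- the double periodic Schwarzschild potential satisfies
u_PS(ρ,z) = (8M/L) ln ρ + O(1) as ρ → ∞, uniformly in z. -/
theorem double_periodic_schwarzschild_asymptotics
    (M L : ℝ) (hM : 0 < M) (hL : 4 * M < L) :
    ∃ C > 0, ∃ ρ₀ > 0, ∀ ρ ≥ ρ₀, ∀ z : ℝ,
      |uPSdouble M L ρ z - (8 * M / L) * Real.log ρ| ≤ C := by
  have hl0 : (0:ℝ) < L := by linarith
  refine ⟨2*((4*M/L)*(|Real.log L| + 2) + 11), by positivity, 4*L, by positivity, ?_⟩
  intro ρ hρ z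
  have hsigned : ∀ s : ℝ, |s| = 1 →
      |uPSsigned M L s ρ z - (4*M/L) * Real.log ρ| ≤ (4*M/L)*(|Real.log L| + 2) + 11 := by
    intro s hs
    rw [uPSsigned_eq_uGen]
    -- reduce to the fundamental domain
    set z₀ : ℝ := Int.fract (z/L) * L with hz₀
    have hfr0 : 0 ≤ Int.fract (z/L) := Int.fract_nonneg _
    have hfr1 : Int.fract (z/L) < 1 := Int.fract_lt_one _
    have hz₀0 : 0 ≤ z₀ := by rw [hz₀]; positivity
    have hz₀1 : z₀ ≤ L := by
      rw [hz₀]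
      nlinarith
    have hzdec : z = z₀ + ((⌊z/L⌋ : ℤ):ℝ) * L := by
      rw [hz₀, Int.fract]
      field_simp
      ring
    have hper : uGen M L ρ (s * L / 4) z = uGen M L ρ (s * L / 4) z₀ := by
      rw [hzdec]
      exact uGen_int hM hL hρ z₀ (s * L / 4) ⌊z/L⌋
    rw [hper]
    have hc : |s * L / 4| = L / 4 := by
      rw [abs_div, abs_mul, hs]
      rw [abs_of_pos hl0]
      norm_num
    exact uGen_bound hM hL hρ hz₀0 hz₀1 (le_of_eq hc)
  have h1 := hsigned (-1) (by norm_num)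
  have h2 := hsigned 1 (by norm_num)
  rw [uPSdouble]
  have hsplit : uPSsigned M L (-1) ρ z + uPSsigned M L 1 ρ z - (8 * M / L) * Real.log ρ
      = (uPSsigned M L (-1) ρ z - (4*M/L) * Real.log ρ)
        + (uPSsigned M L 1 ρ z - (4*M/L) * Real.log ρ) := by ring
  rw [hsplit]
  calc |_ + _| ≤ _ := abs_add_le _ _
    _ ≤ 2*((4*M/L)*(|Real.log L| + 2) + 11) := by linarith
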